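/- Let R be a binary relation on ℕ whose convolution language is regular. Then there exists a constant D > 0 with the following property (Pumping Rule 2): for every threshold l ∈ ℕ and every pair (m,n) ∈ R such that each of m and n is either < l or ≥ l + 2D, the pair (m',n') also lies in R, where m' = m − D if m ≥ l + 2D and m' = m if m < l, and likewise n' = n − D if n ≥ l + 2D and n' = n if n < l. -/

import Mathlib

/-- The convolution word of the pair `(m, n)`, over the three-letter alphabet `Fin 3`
(`0` plays the role of `s`, `1` of `l`, `2` of `r`). -/
def convWord (m n : ℕ) : List (Fin 3) :=
  List.replicate (min m n) 0 ++ List.replicate (m - min m n) 1 ++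
    List.replicate (n - min m n) 2

/-- The convolution language of a binary relation on `ℕ`. -/
def convLang (R : ℕ → ℕ → Prop) : Language (Fin 3) :=
  {w | ∃ m n, R m n ∧ w = convWord m n}

/-- A binary relation on `ℕ` is regular if its convolution language is regular. -/
def RegularRel (R : ℕ → ℕ → Prop) : Prop :=
  (convLang R).IsRegular


-- iterate periodicity
lemma iter_period {σ : Type} [Fintype σ] (f : σ → σ) (x : σ) {e : ℕ}
    (he : Fintype.card σ + Nat.factorial (Fintype.card σ) ≤ e) :
    f^[e] x = f^[e - Nat.factorial (Fintype.card σ)] x := by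
  set k := Fintype.card σ with hk
  have : ∃ a b : Fin (k+1), a ≠ b ∧ f^[a.1] x = f^[b.1] x := by
    have h := Fintype.exists_ne_map_eq_of_card_lt (fun a : Fin (k+1) => f^[a.1] x) (by simp; omega)
    obtain ⟨a, b, hab, h⟩ := h
    exact ⟨a, b, hab, h⟩
  obtain ⟨a, b, hab, h⟩ := this
  -- wlog a < b
  obtain ⟨i, j, hij, hjk, hcyc⟩ : ∃ i j : ℕ, i < j ∧ j ≤ k ∧ f^[i] x = f^[j] x := by
    rcases lt_or_gt_of_ne hab with h' | h'
    · exact ⟨a.1, b.1, h', Nat.lt_succ_iff.mp b.2, h⟩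
    · exact ⟨b.1, a.1, h', Nat.lt_succ_iff.mp a.2, h.symm⟩
  set c := j - i with hc
  have hc0 : 0 < c := by omega
  have hck : c ≤ k := by omega
  have hper : ∀ n, i ≤ n → f^[n + c] x = f^[n] x := by
    intro n hn
    have h1 : n + c = (n - i) + j := by omega
    have h2 : n = (n - i) + i := by omega
    rw [h1, Function.iterate_add_apply, ← hcyc, ← Function.iterate_add_apply, ← h2]
  have hpert : ∀ t n, i ≤ n → f^[n + t * c] x = f^[n] x := by
    intro t
    induction t with
    | zero => simp
    | succ t ih =>
      intro n hn
      have : n + (t+1) * c = (n + c) + t * c := by ring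
      rw [this, ih _ (by omega), hper _ hn]
  have hdvd : c ∣ Nat.factorial k := Nat.dvd_factorial hc0 hck
  obtain ⟨t, ht⟩ := hdvd
  have : e = (e - Nat.factorial k) + (Nat.factorial k / c) * c := by
    have : Nat.factorial k / c * c = Nat.factorial k := Nat.div_mul_cancel ⟨t, ht⟩
    have hke : Nat.factorial k ≤ e := by omega
    omega
  conv_lhs => rw [this]
  exact hpert _ _ (by omega)

lemma evalFrom_replicate {σ : Type} (M : DFA (Fin 3) σ) (q : σ) (a : Fin 3) (e : ℕ) :
    M.evalFrom q (List.replicate e a) = (fun s => M.step s a)^[e] q := by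
  induction e generalizing q with
  | zero => rfl
  | succ e ih =>
    rw [List.replicate_succ]
    show M.evalFrom (M.step q a) (List.replicate e a) = _
    rw [ih, Function.iterate_succ_apply]

lemma pump {L : Language (Fin 3)} (h : L.IsRegular) :
    ∃ D : ℕ, 0 < D ∧ ∀ (u w : List (Fin 3)) (a : Fin 3) (e : ℕ), 2 * D ≤ e →
      u ++ List.replicate e a ++ w ∈ L → u ++ List.replicate (e - D) a ++ w ∈ L := by
  obtain ⟨σ, hfin, M, hM⟩ := h
  refine ⟨Nat.factorial (Fintype.card σ), Nat.factorial_pos _, fun u w a e he hmem => ?_⟩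
  rw [← hM] at hmem ⊢
  rw [DFA.mem_accepts] at hmem ⊢
  have hcd : Fintype.card σ ≤ Nat.factorial (Fintype.card σ) := Nat.self_le_factorial _
  unfold DFA.eval at hmem ⊢
  rw [DFA.evalFrom_of_append, DFA.evalFrom_of_append] at hmem ⊢
  rw [evalFrom_replicate] at hmem ⊢
  rw [iter_period (he := by omega)] at hmem
  exact hmem

lemma convWord_inj {m n m' n' : ℕ} (h : convWord m n = convWord m' n') : m = m' ∧ n = n' := by
  have h0 := congrArg (List.count (0 : Fin 3)) h
  have h1 := congrArg (List.count (1 : Fin 3)) h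
  have h2 := congrArg (List.count (2 : Fin 3)) h
  simp [convWord, List.count_append, List.count_replicate] at h0 h1 h2
  omega

theorem stmt1 (R : ℕ → ℕ → Prop) (hR : RegularRel R) :
    ∃ D : ℕ, 0 < D ∧ ∀ (l m n : ℕ), R m n →
      (m < l ∨ l + 2 * D ≤ m) → (n < l ∨ l + 2 * D ≤ n) →
      R (if l + 2 * D ≤ m then m - D else m) (if l + 2 * D ≤ n then n - D else n) := by
  obtain ⟨D, hD, hpump⟩ := pump hR
  refine ⟨D, hD, fun l m n hmn hm hn => ?_⟩
  have key : ∀ u w a e, 2 * D ≤ e → ∀ m' n', R m' n' →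
      convWord m' n' = u ++ List.replicate e a ++ w →
      ∀ m₀ n₀, convWord m₀ n₀ = u ++ List.replicate (e - D) a ++ w → R m₀ n₀ := by
    intro u w a e he m' n' hR' heq m₀ n₀ heq0
    have : u ++ List.replicate (e - D) a ++ w ∈ convLang R :=
      hpump u w a e he ⟨m', n', hR', heq.symm⟩
    obtain ⟨m₁, n₁, hR1, heq1⟩ := this
    obtain ⟨rfl, rfl⟩ := convWord_inj (heq0.trans heq1)
    exact hR1
  rcases hm with hm | hm <;> rcases hn with hn | hn
  · rw [if_neg (by omega), if_neg (by omega)]; exact hmn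
  · -- m < l, n big
    rw [if_neg (by omega), if_pos hn]
    have hmin : min m n = m := by omega
    have hmin' : min m (n - D) = m := by omega
    refine key (List.replicate m 0 ++ List.replicate 0 1) [] 2 (n - m) (by omega) m n hmn ?_
      m (n - D) ?_
    · simp [convWord, hmin]
    · rw [convWord, hmin', show n - D - m = n - m - D from by omega]
      simp
  · -- m big, n < l
    rw [if_pos hm, if_neg (by omega)]
    have hmin : min m n = n := by omega
    have hmin' : min (m - D) n = n := by omega
    refine key (List.replicate n 0) (List.replicate 0 2) 1 (m - n) (by omega) m n hmn ?_
      (m - D) n ?_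
    · simp [convWord, hmin]
    · rw [convWord, hmin', show m - D - n = m - n - D from by omega]
      simp
  · -- both big
    rw [if_pos hm, if_pos hn]
    have hmin : min (m - D) (n - D) = min m n - D := by omega
    refine key [] (List.replicate (m - min m n) 1 ++ List.replicate (n - min m n) 2) 0
      (min m n) (by omega) m n hmn ?_ (m - D) (n - D) ?_
    · simp [convWord]
    · rw [convWord, hmin, show m - D - (min m n - D) = m - min m n from by omega,
        show n - D - (min m n - D) = n - min m n from by omega]
      simp
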